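/- arXiv:2211.09416 — 2 statements merged into one kernel-verified Lean document; each statement's English description precedes it below -/
import Mathlib

section
/- If |c_β| e^{⟨β,x⟩} > Σ_{α ≠ β} |c_α| e^{⟨α,x⟩} for all x in a connected set S ⊂ ℝ^n and a fixed exponent β, then S is contained in a single connected component of the amoeba complement ᶜ𝒜_p. -/
open Real

noncomputable def evalL (n : ℕ) (A : Finset (Fin n → ℤ)) (c : (Fin n → ℤ) → ℂ)
    (z : Fin n → ℂ) : ℂ :=
  ∑ α ∈ A, c α * ∏ j, z j ^ α j

/-- The amoeba: image under `Log(z) = (ln|z₁|,…,ln|zₙ|)` of the zero locus in `(ℂ*)ⁿ`. -/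
def amoebaOf (n : ℕ) (f : (Fin n → ℂ) → ℂ) : Set (Fin n → ℝ) :=
  {x | ∃ z : Fin n → ℂ, (∀ j, z j ≠ 0) ∧ f z = 0 ∧
        ∀ j, Real.log (‖z j‖) = x j}

lemma exp_zpow_aux (x : ℝ) (m : ℤ) : Real.exp x ^ m = Real.exp ((m : ℝ) * x) := by
  rw [← Real.rpow_intCast, ← Real.exp_mul, mul_comm]

/-- If a fixed term β is lopsidedly dominant at every point of a connected set S,
then S lies in a single connected component of the amoeba complement. -/
theorem lopsided_connected_subset_component (n : ℕ) (A : Finset (Fin n → ℤ))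
    (c : (Fin n → ℤ) → ℂ) (β : Fin n → ℤ) (hβ : β ∈ A)
    (S : Set (Fin n → ℝ)) (hS : IsConnected S)
    (hlop : ∀ x ∈ S,
      ∑ α ∈ A.erase β, ‖c α‖ * Real.exp (∑ j, (α j : ℝ) * x j) <
        ‖c β‖ * Real.exp (∑ j, (β j : ℝ) * x j)) :
    S ⊆ (amoebaOf n (evalL n A c))ᶜ ∧
      ∀ x ∈ S, S ⊆ connectedComponentIn (amoebaOf n (evalL n A c))ᶜ x := by
  have hcompl : S ⊆ (amoebaOf n (evalL n A c))ᶜ := by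
    intro x hx hmem
    obtain ⟨z, hz0, hfz, hlog⟩ := hmem
    have habs : ∀ j, ‖z j‖ = Real.exp (x j) := fun j => by
      rw [← hlog j, Real.exp_log (norm_pos_iff.mpr (hz0 j))]
    have key : ∀ α : Fin n → ℤ,
        ‖∏ j, z j ^ α j‖ = Real.exp (∑ j, (α j : ℝ) * x j) := by
      intro α
      rw [norm_prod, Real.exp_sum]
      exact Finset.prod_congr rfl fun j _ => by
        rw [norm_zpow, habs j, exp_zpow_aux]
    have heq : c β * ∏ j, z j ^ β j = -∑ α ∈ A.erase β, c α * ∏ j, z j ^ α j := by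
      have h := hfz
      rw [evalL, ← Finset.add_sum_erase A _ hβ] at h
      linear_combination h
    have h1 : ‖c β‖ * Real.exp (∑ j, (β j : ℝ) * x j)
        = ‖∑ α ∈ A.erase β, c α * ∏ j, z j ^ α j‖ := by
      rw [← key β, ← norm_mul, heq, norm_neg]
    have h2 : ‖∑ α ∈ A.erase β, c α * ∏ j, z j ^ α j‖
        ≤ ∑ α ∈ A.erase β, ‖c α‖ * Real.exp (∑ j, (α j : ℝ) * x j) := by
      refine (norm_sum_le _ _).trans_eq ?_
      exact Finset.sum_congr rfl fun α _ => by rw [norm_mul, key α]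
    have := hlop x hx
    rw [h1] at this
    exact absurd h2 (not_le.mpr this)
  exact ⟨hcompl, fun x hx =>
    hS.isPreconnected.subset_connectedComponentIn hx hcompl⟩
end

section
/- For nonzero complex numbers c₀, c₁, c₂ and positive integer n, the complement of the amoeba of the trinomial p(z₁,z₂) = c₀ + c₁ z₁^n + c₂ z₂^n has at least three connected components, one unbounded in each of the directions (0,0), (n,0), (0,n) (i.e., containing points where the corresponding monomial is lopsidedly dominant). -/
open Real

/-- Given moduli b, c and a target w satisfying the triangle inequalities,
there exist complex numbers with those moduli summing to w. -/
lemma exists_two_complex (w : ℂ) (b c : ℝ) (hb : 0 ≤ b) (hc : 0 ≤ c)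
    (h1 : ‖w‖ ≤ b + c) (h2 : b ≤ ‖w‖ + c)
    (h3 : c ≤ ‖w‖ + b) :
    ∃ u v : ℂ, ‖u‖ = b ∧ ‖v‖ = c ∧ u + v = w := by
  rcases eq_or_ne w 0 with rfl | hw
  · simp only [map_zero, norm_zero, zero_add] at h1 h2 h3
    have hbc : b = c := le_antisymm h2 h3
    refine ⟨(b : ℂ), -(b : ℂ), ?_, ?_, by ring⟩
    · simp [Complex.norm_real, abs_of_nonneg hb]
    · rw [hbc]; simp [Complex.norm_real, abs_of_nonneg hc]
  · set a : ℝ := ‖w‖ with ha_def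
    have ha : 0 < a := norm_pos_iff.mpr hw
    set p : ℝ := (a ^ 2 + b ^ 2 - c ^ 2) / (2 * a) with hp_def
    have hp : 2 * a * p = a ^ 2 + b ^ 2 - c ^ 2 := by
      rw [hp_def]; field_simp [ha.ne']
    have hq2 : 0 ≤ b ^ 2 - p ^ 2 := by
      nlinarith [mul_nonneg (sub_nonneg.2 h1) (sub_nonneg.2 h2),
        mul_nonneg (sub_nonneg.2 h3) (by positivity : (0:ℝ) ≤ a + b + c),
        sq_nonneg p, mul_pos ha ha, mul_pos (mul_pos ha ha) (mul_pos ha ha)]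
    set q : ℝ := Real.sqrt (b ^ 2 - p ^ 2) with hq_def
    have hq : q ^ 2 = b ^ 2 - p ^ 2 := Real.sq_sqrt hq2
    refine ⟨w * ((p : ℂ) + (q : ℂ) * Complex.I) / a,
            w * (((a - p : ℝ) : ℂ) + ((-q : ℝ) : ℂ) * Complex.I) / a, ?_, ?_, ?_⟩
    · have : ‖w * ((p : ℂ) + (q : ℂ) * Complex.I) / a‖ ^ 2 = b ^ 2 := by
        rw [Complex.sq_norm, map_div₀, map_mul, Complex.normSq_add_mul_I,
          Complex.normSq_ofReal, ← Complex.sq_norm w, ← ha_def]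
        field_simp
        nlinarith [hq]
      have h' := this
      have := pow_left_inj₀ (norm_nonneg _) hb (two_ne_zero) |>.1 this
      exact this
    · have : ‖w * (((a - p : ℝ) : ℂ) + ((-q : ℝ) : ℂ) * Complex.I) / a‖ ^ 2 = c ^ 2 := by
        rw [Complex.sq_norm, map_div₀, map_mul, Complex.normSq_add_mul_I,
          Complex.normSq_ofReal, ← Complex.sq_norm w, ← ha_def]
        field_simp
        nlinarith [hq, hp]
      exact pow_left_inj₀ (norm_nonneg _) hc (two_ne_zero) |>.1 this
    · have haC : (a : ℂ) ≠ 0 := by exact_mod_cast ha.ne'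
      field_simp
      push_cast
      ring

lemma amoeba_mem_iff (n : ℕ) (hn : 1 ≤ n) (c₀ c₁ c₂ : ℂ)
    (h₀ : c₀ ≠ 0) (h₁ : c₁ ≠ 0) (h₂ : c₂ ≠ 0) (x : Fin 2 → ℝ) :
    x ∈ amoebaOf 2 (fun z => c₀ + c₁ * z 0 ^ n + c₂ * z 1 ^ n) ↔
      (‖c₀‖ ≤ ‖c₁‖ * Real.exp (n * x 0) + ‖c₂‖ * Real.exp (n * x 1) ∧
       ‖c₁‖ * Real.exp (n * x 0) ≤ ‖c₀‖ + ‖c₂‖ * Real.exp (n * x 1) ∧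
       ‖c₂‖ * Real.exp (n * x 1) ≤ ‖c₀‖ + ‖c₁‖ * Real.exp (n * x 0)) := by
  constructor
  · rintro ⟨z, hz, hf, hx⟩
    have habs : ∀ j, ‖z j‖ = Real.exp (x j) := fun j => by
      rw [← hx j, Real.exp_log (norm_pos_iff.mpr (hz j))]
    have e0 : ‖c₁ * z 0 ^ n‖ = ‖c₁‖ * Real.exp (n * x 0) := by
      rw [norm_mul, norm_pow, habs, Real.exp_nat_mul]
    have e1 : ‖c₂ * z 1 ^ n‖ = ‖c₂‖ * Real.exp (n * x 1) := by
      rw [norm_mul, norm_pow, habs, Real.exp_nat_mul]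
    simp only at hf
    refine ⟨?_, ?_, ?_⟩
    · have hc : c₀ = -(c₁ * z 0 ^ n) + -(c₂ * z 1 ^ n) := by linear_combination hf
      rw [hc]
      calc ‖-(c₁ * z 0 ^ n) + -(c₂ * z 1 ^ n)‖
          ≤ ‖-(c₁ * z 0 ^ n)‖ + ‖-(c₂ * z 1 ^ n)‖ :=
            norm_add_le _ _
        _ = _ := by rw [norm_neg, norm_neg, e0, e1]
    · have hc : c₁ * z 0 ^ n = -c₀ + -(c₂ * z 1 ^ n) := by linear_combination hf
      rw [← e0, hc]
      calc ‖-c₀ + -(c₂ * z 1 ^ n)‖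
          ≤ ‖-c₀‖ + ‖-(c₂ * z 1 ^ n)‖ := norm_add_le _ _
        _ = _ := by rw [norm_neg, norm_neg, e1]
    · have hc : c₂ * z 1 ^ n = -c₀ + -(c₁ * z 0 ^ n) := by linear_combination hf
      rw [← e1, hc]
      calc ‖-c₀ + -(c₁ * z 0 ^ n)‖
          ≤ ‖-c₀‖ + ‖-(c₁ * z 0 ^ n)‖ := norm_add_le _ _
        _ = _ := by rw [norm_neg, norm_neg, e0]
  · rintro ⟨t1, t2, t3⟩
    set b : ℝ := ‖c₁‖ * Real.exp (n * x 0) with hb_def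
    set c : ℝ := ‖c₂‖ * Real.exp (n * x 1) with hc_def
    have hbpos : 0 < b := mul_pos (norm_pos_iff.mpr h₁) (Real.exp_pos _)
    have hcpos : 0 < c := mul_pos (norm_pos_iff.mpr h₂) (Real.exp_pos _)
    have hw : ‖-c₀‖ = ‖c₀‖ := norm_neg _
    obtain ⟨u, v, hu, hv, huv⟩ := exists_two_complex (-c₀) b c hbpos.le hcpos.le
      (by rwa [hw]) (by rwa [hw]) (by rwa [hw])
    have hune : u ≠ 0 := fun h => by simp [h] at hu; exact hbpos.ne' hu.symm
    have hvne : v ≠ 0 := fun h => by simp [h] at hv; exact hcpos.ne' hv.symm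
    obtain ⟨z0, hz0⟩ := IsAlgClosed.exists_pow_nat_eq (u / c₁) (lt_of_lt_of_le one_pos hn)
    obtain ⟨z1, hz1⟩ := IsAlgClosed.exists_pow_nat_eq (v / c₂) (lt_of_lt_of_le one_pos hn)
    have hz0ne : z0 ≠ 0 := by
      intro h; rw [h, zero_pow (by omega), eq_comm, div_eq_zero_iff] at hz0
      exact hune (hz0.resolve_right h₁)
    have hz1ne : z1 ≠ 0 := by
      intro h; rw [h, zero_pow (by omega), eq_comm, div_eq_zero_iff] at hz1
      exact hvne (hz1.resolve_right h₂)
    have habs0 : ‖z0‖ = Real.exp (x 0) := by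
      have : ‖z0‖ ^ n = Real.exp (x 0) ^ n := by
        rw [← norm_pow, hz0, norm_div, hu, ← Real.exp_nat_mul, hb_def]
        field_simp [norm_ne_zero_iff.mpr h₁]
      exact pow_left_inj₀ (norm_nonneg _) (Real.exp_pos _).le (by omega) |>.1 this
    have habs1 : ‖z1‖ = Real.exp (x 1) := by
      have : ‖z1‖ ^ n = Real.exp (x 1) ^ n := by
        rw [← norm_pow, hz1, norm_div, hv, ← Real.exp_nat_mul, hc_def]
        field_simp [norm_ne_zero_iff.mpr h₂]
      exact pow_left_inj₀ (norm_nonneg _) (Real.exp_pos _).le (by omega) |>.1 this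
    refine ⟨![z0, z1], ?_, ?_, ?_⟩
    · intro j; fin_cases j <;> simpa
    · simp only [Matrix.cons_val_zero, Matrix.cons_val_one, Matrix.head_cons, hz0, hz1]
      have e1' : c₁ * (u / c₁) = u := by field_simp
      have e2' : c₂ * (v / c₂) = v := by field_simp
      rw [e1', e2']
      linear_combination huv
    · intro j; fin_cases j <;> simp [habs0, habs1, Real.log_exp]

/-- For the trinomial c₀ + c₁z₁ⁿ + c₂z₂ⁿ, the three sets of points where one of
the monomials is lopsidedly dominant are nonempty subsets of the amoeba
complement, and points dominant for different vertices lie in different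
connected components: the complement has at least three components, one
unbounded in each of the directions (0,0), (n,0), (0,n). -/
theorem trinomial_amoeba_compl_three_components (n : ℕ) (hn : 1 ≤ n)
    (c₀ c₁ c₂ : ℂ) (h₀ : c₀ ≠ 0) (h₁ : c₁ ≠ 0) (h₂ : c₂ ≠ 0) :
    let f : (Fin 2 → ℂ) → ℂ := fun z => c₀ + c₁ * z 0 ^ n + c₂ * z 1 ^ n
    let L₀ : Set (Fin 2 → ℝ) := {x | ‖c₁‖ * Real.exp (n * x 0) +
      ‖c₂‖ * Real.exp (n * x 1) < ‖c₀‖}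
    let L₁ : Set (Fin 2 → ℝ) := {x | ‖c₀‖ +
      ‖c₂‖ * Real.exp (n * x 1) < ‖c₁‖ * Real.exp (n * x 0)}
    let L₂ : Set (Fin 2 → ℝ) := {x | ‖c₀‖ +
      ‖c₁‖ * Real.exp (n * x 0) < ‖c₂‖ * Real.exp (n * x 1)}
    L₀.Nonempty ∧ L₁.Nonempty ∧ L₂.Nonempty ∧
    L₀ ⊆ (amoebaOf 2 f)ᶜ ∧ L₁ ⊆ (amoebaOf 2 f)ᶜ ∧ L₂ ⊆ (amoebaOf 2 f)ᶜ ∧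
    (∀ x ∈ L₀, ∀ y ∈ L₁,
      connectedComponentIn (amoebaOf 2 f)ᶜ x ≠ connectedComponentIn (amoebaOf 2 f)ᶜ y) ∧
    (∀ x ∈ L₀, ∀ y ∈ L₂,
      connectedComponentIn (amoebaOf 2 f)ᶜ x ≠ connectedComponentIn (amoebaOf 2 f)ᶜ y) ∧
    (∀ x ∈ L₁, ∀ y ∈ L₂,
      connectedComponentIn (amoebaOf 2 f)ᶜ x ≠ connectedComponentIn (amoebaOf 2 f)ᶜ y) := by
  intro f L₀ L₁ L₂
  set a₀ : ℝ := ‖c₀‖ with ha₀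
  set a₁ : ℝ := ‖c₁‖ with ha₁
  set a₂ : ℝ := ‖c₂‖ with ha₂
  have ha₀p : 0 < a₀ := norm_pos_iff.mpr h₀
  have ha₁p : 0 < a₁ := norm_pos_iff.mpr h₁
  have ha₂p : 0 < a₂ := norm_pos_iff.mpr h₂
  have hn' : (1 : ℝ) ≤ n := by exact_mod_cast hn
  -- small value t : exp (n*t) is small
  set M : ℝ := a₁ + a₂ + 1 with hM
  have hMp : 0 < M := by positivity
  set t : ℝ := min (-1) (Real.log (a₀ / M)) with ht
  have htneg : t ≤ -1 := min_le_left _ _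
  have hexp_nt : Real.exp (n * t) ≤ a₀ / M := by
    calc Real.exp (n * t) ≤ Real.exp t := by
          apply Real.exp_le_exp.2
          nlinarith
      _ ≤ a₀ / M := by
          calc Real.exp t ≤ Real.exp (Real.log (a₀ / M)) :=
                Real.exp_le_exp.2 (min_le_right _ _)
            _ = a₀ / M := Real.exp_log (by positivity)
  have hsmall : a₁ * Real.exp (n * t) + a₂ * Real.exp (n * t) < a₀ := by
    have h1 : a₁ * Real.exp (n * t) + a₂ * Real.exp (n * t) ≤ (a₁ + a₂) * (a₀ / M) := by
      have := Real.exp_pos (n * t)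
      nlinarith
    have h2 : (a₁ + a₂) * (a₀ / M) < a₀ := by
      have hlt : a₁ + a₂ < M := by rw [hM]; linarith
      have h3 := mul_lt_mul_of_pos_right hlt (div_pos ha₀p hMp)
      rwa [mul_comm M, div_mul_cancel₀ a₀ hMp.ne'] at h3
    linarith
  have hsmall1 : a₂ * Real.exp (n * t) < a₀ := by nlinarith [Real.exp_pos (n*t), mul_pos ha₁p (Real.exp_pos (n*t))]
  have hsmall2 : a₁ * Real.exp (n * t) < a₀ := by nlinarith [Real.exp_pos (n*t), mul_pos ha₂p (Real.exp_pos (n*t))]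
  -- big values
  have hbig : ∀ c : ℝ, 0 < c → ∀ K : ℝ, 0 < K →
      K < c * Real.exp (n * max 1 (Real.log (2 * K / c))) := by
    intro c hc K hK
    have hs1 : (1:ℝ) ≤ max 1 (Real.log (2 * K / c)) := le_max_left _ _
    have : Real.exp (max 1 (Real.log (2 * K / c))) ≤ Real.exp (n * max 1 (Real.log (2 * K / c))) := by
      apply Real.exp_le_exp.2; nlinarith
    have h2 : 2 * K / c ≤ Real.exp (max 1 (Real.log (2 * K / c))) := by
      calc 2 * K / c = Real.exp (Real.log (2 * K / c)) := (Real.exp_log (by positivity)).symm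
        _ ≤ _ := Real.exp_le_exp.2 (le_max_right _ _)
    have h3 : 2 * K / c ≤ Real.exp (n * max 1 (Real.log (2 * K / c))) := le_trans h2 this
    rw [div_le_iff₀ hc] at h3
    nlinarith
  -- membership characterization
  have hmem := amoeba_mem_iff n hn c₀ c₁ c₂ h₀ h₁ h₂
  -- nonempty
  have hne0 : L₀.Nonempty := ⟨fun _ => t, by show a₁ * Real.exp (n * t) + a₂ * Real.exp (n * t) < a₀; exact hsmall⟩
  have hne1 : L₁.Nonempty := by
    set s : ℝ := max 1 (Real.log (2 * (a₀ + a₀) / a₁)) with hs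
    refine ⟨![s, t], ?_⟩
    show a₀ + a₂ * Real.exp (n * (![s, t]) 1) < a₁ * Real.exp (n * (![s, t]) 0)
    simp only [Matrix.cons_val_one, Matrix.head_cons, Matrix.cons_val_zero]
    have := hbig a₁ ha₁p (a₀ + a₀) (by positivity)
    linarith
  have hne2 : L₂.Nonempty := by
    set s : ℝ := max 1 (Real.log (2 * (a₀ + a₀) / a₂)) with hs
    refine ⟨![t, s], ?_⟩
    show a₀ + a₁ * Real.exp (n * (![t, s]) 0) < a₂ * Real.exp (n * (![t, s]) 1)
    simp only [Matrix.cons_val_one, Matrix.head_cons, Matrix.cons_val_zero]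
    have := hbig a₂ ha₂p (a₀ + a₀) (by positivity)
    linarith
  -- subsets of complement
  have hsub0 : L₀ ⊆ (amoebaOf 2 f)ᶜ := by
    intro x hx hxa
    have := (hmem x).1 hxa
    exact absurd hx (by simp only [L₀, Set.mem_setOf_eq]; push_neg; exact this.1)
  have hsub1 : L₁ ⊆ (amoebaOf 2 f)ᶜ := by
    intro x hx hxa
    have := (hmem x).1 hxa
    exact absurd hx (by simp only [L₁, Set.mem_setOf_eq]; push_neg; exact this.2.1)
  have hsub2 : L₂ ⊆ (amoebaOf 2 f)ᶜ := by
    intro x hx hxa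
    have := (hmem x).1 hxa
    exact absurd hx (by simp only [L₂, Set.mem_setOf_eq]; push_neg; exact this.2.2)
  -- openness
  have hcont : ∀ i : Fin 2, Continuous fun x : Fin 2 → ℝ => Real.exp (n * x i) :=
    fun i => Real.continuous_exp.comp (continuous_const.mul (continuous_apply i))
  have hopen0 : IsOpen L₀ :=
    isOpen_lt (((hcont 0).const_smul a₁).add ((hcont 1).const_smul a₂)) continuous_const
  have hopen1 : IsOpen L₁ :=
    isOpen_lt (continuous_const.add ((hcont 1).const_smul a₂)) ((hcont 0).const_smul a₁)
  have hopen2 : IsOpen L₂ :=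
    isOpen_lt (continuous_const.add ((hcont 0).const_smul a₁)) ((hcont 1).const_smul a₂)
  -- cover
  have hcover : (amoebaOf 2 f)ᶜ ⊆ L₀ ∪ L₁ ∪ L₂ := by
    intro x hx
    by_contra hxn
    simp only [Set.mem_union, not_or] at hxn
    apply hx
    refine (hmem x).2 ⟨?_, ?_, ?_⟩
    · have := hxn.1.1; simp only [L₀, Set.mem_setOf_eq, not_lt] at this; exact this
    · have := hxn.1.2; simp only [L₁, Set.mem_setOf_eq, not_lt] at this; exact this
    · have := hxn.2; simp only [L₂, Set.mem_setOf_eq, not_lt] at this; exact this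
  -- disjointness
  have hd01 : ∀ x, x ∈ L₀ → x ∈ L₁ → False := by
    intro x hx0 hx1
    simp only [L₀, L₁, Set.mem_setOf_eq] at hx0 hx1
    nlinarith [mul_pos ha₂p (Real.exp_pos (n * x 1))]
  have hd02 : ∀ x, x ∈ L₀ → x ∈ L₂ → False := by
    intro x hx0 hx2
    simp only [L₀, L₂, Set.mem_setOf_eq] at hx0 hx2
    nlinarith [mul_pos ha₁p (Real.exp_pos (n * x 0))]
  have hd12 : ∀ x, x ∈ L₁ → x ∈ L₂ → False := by
    intro x hx1 hx2
    simp only [L₁, L₂, Set.mem_setOf_eq] at hx1 hx2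
    nlinarith [ha₀p]
  -- components stay inside one L
  have hcomp : ∀ (u v w : Set (Fin 2 → ℝ)), IsOpen u → IsOpen v → IsOpen w →
      (∀ x, x ∈ u → x ∈ v → False) → (∀ x, x ∈ u → x ∈ w → False) →
      (amoebaOf 2 f)ᶜ ⊆ u ∪ (v ∪ w) → ∀ x ∈ u, x ∈ (amoebaOf 2 f)ᶜ →
      connectedComponentIn (amoebaOf 2 f)ᶜ x ⊆ u := by
    intro u v w hu hv hw huv huw hcov x hxu hxc
    apply IsPreconnected.subset_left_of_subset_union hu (hv.union hw)
      (Set.disjoint_left.2 fun y hy hy' => hy'.elim (huv y hy) (huw y hy))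
      ((connectedComponentIn_subset _ _).trans hcov)
      ⟨x, mem_connectedComponentIn hxc, hxu⟩
      isPreconnected_connectedComponentIn
  have key01 : ∀ x ∈ L₀, ∀ y ∈ L₁,
      connectedComponentIn (amoebaOf 2 f)ᶜ x ≠ connectedComponentIn (amoebaOf 2 f)ᶜ y := by
    intro x hx y hy heq
    have hyc : y ∈ (amoebaOf 2 f)ᶜ := hsub1 hy
    have : y ∈ connectedComponentIn (amoebaOf 2 f)ᶜ x := heq ▸ mem_connectedComponentIn hyc
    have hy0 : y ∈ L₀ := hcomp L₀ L₁ L₂ hopen0 hopen1 hopen2 hd01 hd02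
      (by intro z hz; simpa [Set.union_assoc] using hcover hz) x hx (hsub0 hx) this
    exact hd01 y hy0 hy
  have key02 : ∀ x ∈ L₀, ∀ y ∈ L₂,
      connectedComponentIn (amoebaOf 2 f)ᶜ x ≠ connectedComponentIn (amoebaOf 2 f)ᶜ y := by
    intro x hx y hy heq
    have hyc : y ∈ (amoebaOf 2 f)ᶜ := hsub2 hy
    have : y ∈ connectedComponentIn (amoebaOf 2 f)ᶜ x := heq ▸ mem_connectedComponentIn hyc
    have hy0 : y ∈ L₀ := hcomp L₀ L₁ L₂ hopen0 hopen1 hopen2 hd01 hd02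
      (by intro z hz; simpa [Set.union_assoc] using hcover hz) x hx (hsub0 hx) this
    exact hd02 y hy0 hy
  have key12 : ∀ x ∈ L₁, ∀ y ∈ L₂,
      connectedComponentIn (amoebaOf 2 f)ᶜ x ≠ connectedComponentIn (amoebaOf 2 f)ᶜ y := by
    intro x hx y hy heq
    have hyc : y ∈ (amoebaOf 2 f)ᶜ := hsub2 hy
    have : y ∈ connectedComponentIn (amoebaOf 2 f)ᶜ x := heq ▸ mem_connectedComponentIn hyc
    have hy1 : y ∈ L₁ := hcomp L₁ L₀ L₂ hopen1 hopen0 hopen2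
      (fun z hz hz' => hd01 z hz' hz) (fun z hz hz' => hd12 z hz hz')
      (by intro z hz; have := hcover hz
          rcases this with (h | h) | h
          · exact Or.inr (Or.inl h)
          · exact Or.inl h
          · exact Or.inr (Or.inr h)) x hx (hsub1 hx) this
    exact hd12 y hy1 hy
  exact ⟨hne0, hne1, hne2, hsub0, hsub1, hsub2, key01, key02, key12⟩
end
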